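/- Let f ∈ Dom_+(Γ) be strictly positive and bounded, with b := sup_{x∈𝕏} f(x). Suppose there exists an increasing function g : (0,∞) → (0,∞) with ∫_0^b (1/g(y)) dy < ∞, such that Γf(x) ≤ −g(f(x)) for all x ∈ 𝕏. Then E_x(ζ) < ∞ for all x ∈ 𝕏. -/

import Mathlib

open MeasureTheory Set Filter
open scoped Classical ENNReal NNReal

/-- A continuous-time Markov chain on a countably infinite state space `X`,
described by its generator `Γ`, together with a probability space carrying,
for each starting point `x`, the embedded jump chain `jump` and the holding
times `hold` (with `hold n` the holding time at the `n`-th visited state). -/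
structure CTMC where
  X : Type
  countX : Countable X
  infX : Infinite X
  Γ : X → X → ℝ
  γ : X → ℝ
  γ_pos : ∀ x, 0 < γ x
  Γ_offdiag_nonneg : ∀ x y, y ≠ x → 0 ≤ Γ x y
  Γ_diag : ∀ x, Γ x x = - γ x
  γ_sum : ∀ x, HasSum (fun y => if y = x then 0 else Γ x y) (γ x)
  /-- irreducibility of the embedded jump chain -/
  irr : ∀ x y : X, ∃ (n : ℕ) (path : ℕ → X), path 0 = x ∧ path n = y ∧
    ∀ k, k < n → 0 < (if path (k+1) = path k then 0
      else Γ (path k) (path (k+1)) / γ (path k))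
  Ω : Type
  measΩ : MeasurableSpace Ω
  μ : X → @Measure Ω measΩ
  probμ : ∀ x, @IsProbabilityMeasure Ω measΩ (μ x)
  jump : ℕ → Ω → X
  hold : ℕ → Ω → ℝ
  jump_meas : ∀ (n : ℕ) (x : X), MeasurableSet[measΩ] {ω | jump n ω = x}
  hold_meas : ∀ n : ℕ, @Measurable Ω ℝ measΩ _ (hold n)
  hold_pos : ∀ n ω, 0 < hold n ω
  /-- under `μ x` the chain starts at `x` -/
  start : ∀ x : X, μ x {ω | jump 0 ω = x} = 1
  /-- finite-dimensional law: the embedded chain is Markov with transition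
  probabilities `P x y = Γ x y / γ x` (for `y ≠ x`), and conditionally on the
  embedded chain the holding times are independent exponentials of rates
  `γ (jump n)` -/
  law : ∀ (x : X) (n : ℕ) (path : ℕ → X) (t : ℕ → ℝ), path 0 = x → (∀ k, 0 ≤ t k) →
    μ x {ω | (∀ k, k ≤ n → jump k ω = path k) ∧ (∀ k, k < n → t k < hold k ω)}
      = ENNReal.ofReal (∏ k ∈ Finset.range n,
          ((if path (k+1) = path k then 0 else Γ (path k) (path (k+1)) / γ (path k))
            * Real.exp (-(γ (path k)) * t k)))

namespace CTMC

attribute [instance] CTMC.countX CTMC.infX CTMC.measΩ CTMC.probμ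

variable (M : CTMC)

/-- embedded chain transition probabilities -/
noncomputable def P (x y : M.X) : ℝ := if y = x then 0 else M.Γ x y / M.γ x

/-- jump times -/
noncomputable def J (n : ℕ) (ω : M.Ω) : ℝ := ∑ k ∈ Finset.range n, M.hold k ω

/-- explosion (life) time -/
noncomputable def zeta (ω : M.Ω) : ℝ≥0∞ := ⨆ n, ENNReal.ofReal (M.J n ω)

/-- the continuous-time chain: `pos t ω = some (jump n ω)` if `J n ≤ t < J (n+1)`,
and `none` (the cemetery state `∂`) after the explosion time. -/
noncomputable def pos (t : ℝ) (ω : M.Ω) : Option M.X :=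
  if h : ∃ n, M.J n ω ≤ t ∧ t < M.J (n+1) ω then some (M.jump h.choose ω) else none

/-- passage time: `τ_A = inf {t ≥ 0 : ξ_t ∈ A}` -/
noncomputable def tau (A : Set M.X) (ω : M.Ω) : ℝ≥0∞ :=
  sInf (ENNReal.ofReal '' {s : ℝ | 0 ≤ s ∧ ∃ a ∈ A, M.pos s ω = some a})

/-- `f` belongs to the domain of the generator -/
def InDom (f : M.X → ℝ) : Prop :=
  ∀ x : M.X, Summable (fun y => if y = x then 0 else M.Γ x y * f y)

/-- `f ∈ Dom_+(Γ)` -/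
def InDomPos (f : M.X → ℝ) : Prop := (∀ x, 0 ≤ f x) ∧ M.InDom f

/-- action of the generator : `Γ f (x) = ∑_y Γ_{xy} f(y)` -/
noncomputable def gen (f : M.X → ℝ) (x : M.X) : ℝ :=
  (∑' y, if y = x then 0 else M.Γ x y * f y) - M.γ x * f x

/-- recurrence of the embedded jump chain -/
def JumpRecurrent : Prop := ∀ x : M.X, M.μ x {ω | ∃ n, 1 ≤ n ∧ M.jump n ω = x} = 1

/-- `f → ∞` : all sublevel sets are finite -/
def FinSublevels (f : M.X → ℝ) : Prop := ∀ r : ℝ, {x : M.X | f x ≤ r}.Finite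

end CTMC

namespace CTMC
variable (M : CTMC)

lemma P_nonneg (x y : M.X) : 0 ≤ M.P x y := by
  unfold P
  split
  · exact le_rfl
  · exact div_nonneg (M.Γ_offdiag_nonneg x y (by assumption)) (M.γ_pos x).le

lemma P_hasSum (x : M.X) : HasSum (fun y => M.P x y) 1 := by
  have h := (M.γ_sum x).div_const (M.γ x)
  rw [div_self (M.γ_pos x).ne'] at h
  have e : (fun y => M.P x y) = fun y => (if y = x then 0 else M.Γ x y) / M.γ x := by
    funext y
    by_cases hy : y = x <;> simp [P, hy]
  rw [e]
  exact h

/-- transition matrix with values in `ℝ≥0∞` -/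
noncomputable def Pe (x y : M.X) : ℝ≥0∞ := ENNReal.ofReal (M.P x y)

/-- expected holding time at `x` -/
noncomputable def rr (x : M.X) : ℝ≥0∞ := ENNReal.ofReal (M.γ x)⁻¹

/-- expected `n`-th holding time as a function of the starting point -/
noncomputable def S : ℕ → M.X → ℝ≥0∞
  | 0 => M.rr
  | n+1 => fun x => ∑' y, M.Pe x y * S n y

lemma Pe_tsum (x : M.X) : ∑' y, M.Pe x y = 1 := by
  unfold Pe
  rw [← ENNReal.ofReal_tsum_of_nonneg (M.P_nonneg x) (M.P_hasSum x).summable,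
    (M.P_hasSum x).tsum_eq, ENNReal.ofReal_one]

lemma lint_exp {c : ℝ} (hc : 0 < c) :
    ∫⁻ t in Set.Ioi (0:ℝ), ENNReal.ofReal (Real.exp (-c * t)) = ENNReal.ofReal c⁻¹ := by
  rw [← MeasureTheory.ofReal_integral_eq_lintegral_ofReal (exp_neg_integrableOn_Ioi 0 hc)
    (Filter.Eventually.of_forall fun t => (Real.exp_pos _).le)]
  congr 1
  have h := integral_comp_mul_left_Ioi (fun u => Real.exp (-u)) 0 hc
  simp only [mul_zero, integral_exp_neg_Ioi, neg_zero, Real.exp_zero, smul_eq_mul, mul_one] at h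
  rw [show (fun t => Real.exp (-c * t)) = fun t => Real.exp (-(c * t)) from funext fun t => by ring_nf]
  exact h


lemma stepA (x : M.X) (n : ℕ) (p : ℕ → M.X) (hp : p 0 = x) (t : ℝ) (ht : 0 ≤ t) :
    M.μ x ({ω | ∀ k, k ≤ n → M.jump k ω = p k} ∩ {ω | t < M.hold n ω})
      = ENNReal.ofReal ((∏ k ∈ Finset.range n, M.P (p k) (p (k+1)))
          * Real.exp (-M.γ (p n) * t)) := by
  classical
  set C := ∏ k ∈ Finset.range n, M.P (p k) (p (k+1)) with hC
  have hCnn : 0 ≤ C := Finset.prod_nonneg fun k _ => M.P_nonneg _ _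
  set B := {ω | ∀ k, k ≤ n → M.jump k ω = p k} ∩ {ω | t < M.hold n ω} with hB
  set py : M.X → ℕ → M.X := fun y k => if k ≤ n then p k else y with hpy
  set t' : ℕ → ℝ := fun k => if k = n then t else 0 with ht'
  have ht'nn : ∀ k, 0 ≤ t' k := by
    intro k; simp only [ht']; split
    · exact ht
    · exact le_rfl
  have key : ∀ y, M.μ x {ω | (∀ k, k ≤ n + 1 → M.jump k ω = py y k)
        ∧ (∀ k, k < n + 1 → t' k < M.hold k ω)}
      = ENNReal.ofReal (C * Real.exp (-M.γ (p n) * t) * M.P (p n) y) := by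
    intro y
    rw [M.law x (n+1) (py y) t' (by simp [hpy, hp]) ht'nn]
    congr 1
    rw [Finset.prod_range_succ]
    have h1 : ∀ k ∈ Finset.range n,
        ((if py y (k+1) = py y k then 0 else M.Γ (py y k) (py y (k+1)) / M.γ (py y k))
          * Real.exp (-M.γ (py y k) * t' k)) = M.P (p k) (p (k+1)) := by
      intro k hk
      rw [Finset.mem_range] at hk
      have e1 : py y k = p k := if_pos (by omega)
      have e2 : py y (k+1) = p (k+1) := if_pos (by omega)
      have e3 : t' k = 0 := if_neg (by omega)
      rw [e1, e2, e3, mul_zero, Real.exp_zero, mul_one]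
      simp [P]
    rw [Finset.prod_congr rfl h1, ← hC]
    have e1 : py y n = p n := if_pos le_rfl
    have e2 : py y (n+1) = y := if_neg (by omega)
    have e3 : t' n = t := if_pos rfl
    rw [e1, e2, e3]
    simp only [P]
    ring
  have hsets : ∀ y, {ω | (∀ k, k ≤ n + 1 → M.jump k ω = py y k)
        ∧ (∀ k, k < n + 1 → t' k < M.hold k ω)}
      = B ∩ {ω | M.jump (n+1) ω = y} := by
    intro y
    ext ω
    simp only [hB, Set.mem_setOf_eq, Set.mem_inter_iff]
    constructor
    · rintro ⟨h1, h2⟩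
      refine ⟨⟨fun k hk => ?_, ?_⟩, ?_⟩
      · rw [h1 k (by omega)]; exact if_pos hk
      · have h3 := h2 n (by omega)
        simpa [ht'] using h3
      · have h3 := h1 (n+1) le_rfl
        simpa [hpy] using h3
    · rintro ⟨⟨h1, h2⟩, h3⟩
      refine ⟨fun k hk => ?_, fun k hk => ?_⟩
      · by_cases hkn : k ≤ n
        · rw [hpy]; simp only [if_pos hkn]; exact h1 k hkn
        · have hk1 : k = n + 1 := by omega
          subst hk1
          rw [hpy]; simp only [if_neg hkn]; exact h3
      · by_cases hkn : k = n
        · subst hkn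
          simpa [ht'] using h2
        · simpa [ht', hkn] using M.hold_pos k ω
  have hBmeas : MeasurableSet B := by
    refine MeasurableSet.inter ?_ ?_
    · have : {ω | ∀ k, k ≤ n → M.jump k ω = p k}
          = ⋂ (k : ℕ) (_ : k ≤ n), {ω | M.jump k ω = p k} := by
        ext ω; simp [Set.mem_iInter]
      rw [this]
      exact MeasurableSet.iInter fun k => MeasurableSet.iInter fun _ => M.jump_meas k (p k)
    · exact measurableSet_lt measurable_const (M.hold_meas n)
  have hmeas : ∀ y : M.X, MeasurableSet (B ∩ {ω | M.jump (n+1) ω = y}) :=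
    fun y => hBmeas.inter (M.jump_meas (n+1) y)
  have hunion : B = ⋃ y, B ∩ {ω | M.jump (n+1) ω = y} := by
    ext ω
    simp only [Set.mem_iUnion, Set.mem_inter_iff, Set.mem_setOf_eq]
    constructor
    · intro h; exact ⟨M.jump (n+1) ω, h, rfl⟩
    · rintro ⟨y, h, _⟩; exact h
  have hdisj : Pairwise (Function.onFun Disjoint
      fun y => B ∩ {ω | M.jump (n+1) ω = y}) := by
    intro y y' hyy'
    refine Set.disjoint_left.mpr ?_
    rintro ω ⟨_, h1⟩ ⟨_, h2⟩
    exact hyy' (h1 ▸ h2 ▸ rfl)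
  calc M.μ x B = ∑' y, M.μ x (B ∩ {ω | M.jump (n+1) ω = y}) := by
        conv_lhs => rw [hunion]
        exact measure_iUnion hdisj hmeas
    _ = ∑' y, ENNReal.ofReal (C * Real.exp (-M.γ (p n) * t)) * ENNReal.ofReal (M.P (p n) y) := by
        refine tsum_congr fun y => ?_
        rw [← hsets y, key y, ENNReal.ofReal_mul (mul_nonneg hCnn (Real.exp_pos _).le)]
    _ = ENNReal.ofReal (C * Real.exp (-M.γ (p n) * t)) := by
        rw [ENNReal.tsum_mul_left]
        have := M.Pe_tsum (p n)
        unfold Pe at this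
        rw [this, mul_one]


lemma pathset_meas (n : ℕ) (p : ℕ → M.X) :
    MeasurableSet {ω | ∀ k, k ≤ n → M.jump k ω = p k} := by
  have : {ω | ∀ k, k ≤ n → M.jump k ω = p k}
      = ⋂ (k : ℕ) (_ : k ≤ n), {ω | M.jump k ω = p k} := by
    ext ω; simp [Set.mem_iInter]
  rw [this]
  exact MeasurableSet.iInter fun k => MeasurableSet.iInter fun _ => M.jump_meas k (p k)

lemma stepB (x : M.X) (n : ℕ) (p : ℕ → M.X) (hp : p 0 = x) :
    ∫⁻ ω in {ω | ∀ k, k ≤ n → M.jump k ω = p k}, ENNReal.ofReal (M.hold n ω) ∂ M.μ x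
      = ENNReal.ofReal (∏ k ∈ Finset.range n, M.P (p k) (p (k+1)))
          * ENNReal.ofReal (M.γ (p n))⁻¹ := by
  have hCnn : (0:ℝ) ≤ ∏ k ∈ Finset.range n, M.P (p k) (p (k+1)) :=
    Finset.prod_nonneg fun k _ => M.P_nonneg _ _
  rw [lintegral_eq_lintegral_meas_lt _
    (Filter.Eventually.of_forall fun ω => (M.hold_pos n ω).le) (M.hold_meas n).aemeasurable]
  have hcong : ∀ t ∈ Set.Ioi (0:ℝ),
      ((M.μ x).restrict {ω | ∀ k, k ≤ n → M.jump k ω = p k}) {ω | t < M.hold n ω}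
      = ENNReal.ofReal (∏ k ∈ Finset.range n, M.P (p k) (p (k+1)))
          * ENNReal.ofReal (Real.exp (-M.γ (p n) * t)) := by
    intro t ht
    rw [Measure.restrict_apply (measurableSet_lt measurable_const (M.hold_meas n)),
      Set.inter_comm, M.stepA x n p hp t (le_of_lt ht), ENNReal.ofReal_mul hCnn]
  rw [setLIntegral_congr_fun measurableSet_Ioi hcong,
    lintegral_const_mul _ (by
      exact (Real.measurable_exp.comp ((measurable_id.const_mul (-M.γ (p n))))).ennreal_ofReal),
    lint_exp (M.γ_pos (p n))]

/-- extension of a finite path to `ℕ` -/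
def extend (n : ℕ) (v : Fin (n+1) → M.X) : ℕ → M.X :=
  fun k => v ⟨min k n, Nat.lt_succ_of_le (min_le_right _ _)⟩

lemma extend_le {n : ℕ} (v : Fin (n+1) → M.X) {k : ℕ} (hk : k ≤ n) :
    M.extend n v k = v ⟨k, Nat.lt_succ_of_le hk⟩ := by
  unfold extend
  congr 1
  exact Fin.ext (min_eq_left hk)

lemma E_hold (x : M.X) (n : ℕ) :
    ∫⁻ ω, ENNReal.ofReal (M.hold n ω) ∂ M.μ x
      = ∑' v : Fin (n+1) → M.X, (if v 0 = x then
          ENNReal.ofReal (∏ k ∈ Finset.range n, M.P (M.extend n v k) (M.extend n v (k+1)))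
            * M.rr (M.extend n v n) else 0) := by
  classical
  set A : (Fin (n+1) → M.X) → Set M.Ω :=
    fun v => {ω | ∀ k, k ≤ n → M.jump k ω = M.extend n v k} with hA
  have hAmeas : ∀ v, MeasurableSet (A v) := fun v => M.pathset_meas n (M.extend n v)
  have hdisj : Pairwise (Function.onFun Disjoint A) := by
    intro v v' hvv'
    refine Set.disjoint_left.mpr fun ω h1 h2 => hvv' (funext fun i => ?_)
    have e1 := h1 i.val (Nat.lt_succ_iff.mp i.isLt)
    have e2 := h2 i.val (Nat.lt_succ_iff.mp i.isLt)
    rw [M.extend_le v (Nat.lt_succ_iff.mp i.isLt)] at e1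
    rw [M.extend_le v' (Nat.lt_succ_iff.mp i.isLt)] at e2
    rw [show (⟨i.val, Nat.lt_succ_of_le (Nat.lt_succ_iff.mp i.isLt)⟩ : Fin (n+1)) = i from
      Fin.ext rfl] at e1 e2
    rw [← e1, ← e2]
  have hcover : (⋃ v, A v) = Set.univ := by
    refine Set.eq_univ_of_forall fun ω => Set.mem_iUnion.mpr ?_
    refine ⟨fun i => M.jump i.val ω, fun k hk => ?_⟩
    rw [M.extend_le _ hk]
  have h0 : ∫⁻ ω, ENNReal.ofReal (M.hold n ω) ∂ M.μ x
      = ∑' v, ∫⁻ ω in A v, ENNReal.ofReal (M.hold n ω) ∂ M.μ x := by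
    rw [← lintegral_iUnion hAmeas hdisj, hcover, setLIntegral_univ]
  rw [h0]
  refine tsum_congr fun v => ?_
  by_cases hv : v 0 = x
  · rw [if_pos hv]
    have hp0 : M.extend n v 0 = x := by rw [M.extend_le v (Nat.zero_le n)]; exact hv
    rw [M.stepB x n (M.extend n v) hp0]
    rfl
  · rw [if_neg hv]
    have hnull : M.μ x (A v) = 0 := by
      have hsub : A v ⊆ {ω | M.jump 0 ω = x}ᶜ := by
        intro ω hω hc
        have := hω 0 (Nat.zero_le n)
        rw [M.extend_le v (Nat.zero_le n)] at this
        simp only [Set.mem_setOf_eq] at hc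
        rw [this] at hc
        exact hv hc
      refine measure_mono_null hsub ?_
      rw [measure_compl (M.jump_meas 0 x) (measure_ne_top _ _), M.start x]
      simp
    rw [Measure.restrict_eq_zero.mpr hnull]
    simp


lemma tsum_paths (n : ℕ) (x : M.X) :
    (∑' v : Fin (n+1) → M.X, if v 0 = x then
        ENNReal.ofReal (∏ k ∈ Finset.range n, M.P (M.extend n v k) (M.extend n v (k+1)))
          * M.rr (M.extend n v n) else 0) = M.S n x := by
  classical
  induction n generalizing x with
  | zero =>
    have e : ∀ v : Fin 1 → M.X,
        (if v 0 = x then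
          ENNReal.ofReal (∏ k ∈ Finset.range 0, M.P (M.extend 0 v k) (M.extend 0 v (k+1)))
            * M.rr (M.extend 0 v 0) else 0)
        = if v 0 = x then M.rr (v 0) else 0 := by
      intro v
      rw [M.extend_le v le_rfl,
        show (⟨0, Nat.lt_succ_of_le le_rfl⟩ : Fin 1) = 0 from Fin.ext (by simp)]
      simp
    rw [tsum_congr e, ← (Equiv.funUnique (Fin 1) M.X).symm.tsum_eq]
    have e2 : ∀ y : M.X,
        (if (Equiv.funUnique (Fin 1) M.X).symm y 0 = x
          then M.rr ((Equiv.funUnique (Fin 1) M.X).symm y 0) else 0)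
        = if y = x then M.rr y else 0 := fun y => rfl
    rw [tsum_congr e2, tsum_eq_single x (fun y hy => if_neg hy), if_pos rfl]
    rfl
  | succ n ih =>
    have hterm : ∀ (a : M.X) (w : Fin (n+1) → M.X),
        (if (Fin.cons a w : Fin (n+2) → M.X) 0 = x then
            ENNReal.ofReal (∏ k ∈ Finset.range (n+1),
              M.P (M.extend (n+1) (Fin.cons a w) k) (M.extend (n+1) (Fin.cons a w) (k+1)))
              * M.rr (M.extend (n+1) (Fin.cons a w) (n+1)) else 0)
        = (if a = x then ENNReal.ofReal (M.P a (M.extend n w 0)) else 0)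
            * (ENNReal.ofReal (∏ k ∈ Finset.range n,
                M.P (M.extend n w k) (M.extend n w (k+1))) * M.rr (M.extend n w n)) := by
      intro a w
      have hE0 : M.extend (n+1) (Fin.cons a w) 0 = a := by
        rw [M.extend_le _ (Nat.zero_le _),
          show (⟨0, Nat.lt_succ_of_le (Nat.zero_le (n+1))⟩ : Fin (n+2)) = 0 from Fin.ext (by simp)]
        exact Fin.cons_zero (α := fun _ : Fin (n+2) => M.X) a w
      have hEsucc : ∀ k, k ≤ n → M.extend (n+1) (Fin.cons a w) (k+1) = M.extend n w k := by
        intro k hk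
        rw [M.extend_le _ (by omega : k+1 ≤ n+1), M.extend_le w hk]
        exact Fin.cons_succ (α := fun _ : Fin (n+2) => M.X) a w ⟨k, Nat.lt_succ_of_le hk⟩
      simp only [Fin.cons_zero]
      by_cases ha : a = x
      · rw [if_pos ha, if_pos ha, Finset.prod_range_succ']
        rw [Finset.prod_congr rfl (fun k hk => ?_), hE0, hEsucc 0 (Nat.zero_le n),
          hEsucc n le_rfl, ENNReal.ofReal_mul (Finset.prod_nonneg fun k _ => M.P_nonneg _ _)]
        · ring
        · rw [Finset.mem_range] at hk
          rw [hEsucc k (by omega), hEsucc (k+1) (by omega)]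
      · rw [if_neg ha, if_neg ha, zero_mul]
    have step1 : (∑' v : Fin (n+1+1) → M.X, if v 0 = x then
          ENNReal.ofReal (∏ k ∈ Finset.range (n+1),
            M.P (M.extend (n+1) v k) (M.extend (n+1) v (k+1)))
            * M.rr (M.extend (n+1) v (n+1)) else 0)
        = ∑' (a : M.X) (w : Fin (n+1) → M.X),
            (if a = x then ENNReal.ofReal (M.P a (M.extend n w 0)) else 0) *
            (ENNReal.ofReal (∏ k ∈ Finset.range n,
              M.P (M.extend n w k) (M.extend n w (k+1))) * M.rr (M.extend n w n)) := by
      rw [← (Fin.consEquiv (fun _ : Fin (n+2) => M.X)).tsum_eq, ENNReal.tsum_prod']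
      exact tsum_congr fun a => tsum_congr fun w => hterm a w
    rw [step1]
    have step2 : ∀ a : M.X,
        (∑' w : Fin (n+1) → M.X,
          (if a = x then ENNReal.ofReal (M.P a (M.extend n w 0)) else 0) *
          (ENNReal.ofReal (∏ k ∈ Finset.range n,
            M.P (M.extend n w k) (M.extend n w (k+1))) * M.rr (M.extend n w n)))
        = if a = x then (∑' w : Fin (n+1) → M.X,
            ENNReal.ofReal (M.P x (M.extend n w 0)) *
            (ENNReal.ofReal (∏ k ∈ Finset.range n,
              M.P (M.extend n w k) (M.extend n w (k+1))) * M.rr (M.extend n w n))) else 0 := by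
      intro a
      by_cases ha : a = x
      · subst ha; simp
      · simp [ha]
    rw [tsum_congr step2, tsum_eq_single x (fun y hy => if_neg hy), if_pos rfl]
    show _ = ∑' y, M.Pe x y * M.S n y
    calc (∑' w : Fin (n+1) → M.X,
          ENNReal.ofReal (M.P x (M.extend n w 0)) *
          (ENNReal.ofReal (∏ k ∈ Finset.range n,
            M.P (M.extend n w k) (M.extend n w (k+1))) * M.rr (M.extend n w n)))
        = ∑' (w : Fin (n+1) → M.X) (y : M.X), M.Pe x y *
            (if w 0 = y then
              ENNReal.ofReal (∏ k ∈ Finset.range n,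
                M.P (M.extend n w k) (M.extend n w (k+1))) * M.rr (M.extend n w n) else 0) := by
          refine tsum_congr fun w => ?_
          rw [tsum_eq_single (w 0) (fun y hy => by rw [if_neg (fun h => hy h.symm), mul_zero]),
            if_pos rfl]
          congr 1
      _ = ∑' (y : M.X) (w : Fin (n+1) → M.X), M.Pe x y *
            (if w 0 = y then
              ENNReal.ofReal (∏ k ∈ Finset.range n,
                M.P (M.extend n w k) (M.extend n w (k+1))) * M.rr (M.extend n w n) else 0) :=
          ENNReal.tsum_comm
      _ = ∑' y, M.Pe x y * M.S n y := by
          refine tsum_congr fun y => ?_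
          rw [ENNReal.tsum_mul_left, ih y]

lemma partial_bound (GF : M.X → ℝ≥0∞)
    (hG : ∀ x, M.rr x + ∑' y, M.Pe x y * GF y ≤ GF x) :
    ∀ (n : ℕ) (x : M.X), ∑ k ∈ Finset.range n, M.S k x ≤ GF x := by
  intro n
  induction n with
  | zero => intro x; simp
  | succ n ih =>
    intro x
    rw [Finset.sum_range_succ']
    have h1 : ∀ k ∈ Finset.range n, M.S (k+1) x = ∑' y, M.Pe x y * M.S k y :=
      fun k _ => rfl
    rw [Finset.sum_congr rfl h1, ← Summable.tsum_finsetSum (fun k _ => ENNReal.summable)]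
    have h2 : (∑' y, ∑ k ∈ Finset.range n, M.Pe x y * M.S k y)
        = ∑' y, M.Pe x y * ∑ k ∈ Finset.range n, M.S k y := by
      refine tsum_congr fun y => ?_
      rw [Finset.mul_sum]
    rw [h2]
    have h3 : (∑' y, M.Pe x y * ∑ k ∈ Finset.range n, M.S k y) + M.S 0 x
        ≤ (∑' y, M.Pe x y * GF y) + M.rr x := by
      refine add_le_add (ENNReal.tsum_le_tsum fun y => mul_le_mul_right (ih y) _) ?_
      exact le_rfl
    refine h3.trans ?_
    rw [add_comm]
    exact hG x


end CTMC

open CTMC in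
/-- Proposition (explosion via a modulated drift condition): if `f` is bounded,
strictly positive, `g` is increasing on `(0,∞)` with `∫_0^b dy/g(y) < ∞`
(where `b = sup f`), and `Γ f(x) ≤ -g(f(x))` everywhere, then the explosion
time is integrable from every starting point. -/
theorem statement4 (M : CTMC) (f : M.X → ℝ) (hf : M.InDomPos f)
    (hfpos : ∀ x, 0 < f x) (hbdd : BddAbove (Set.range f))
    (b : ℝ) (hb : b = ⨆ x, f x)
    (g : ℝ → ℝ) (hgpos : ∀ y : ℝ, 0 < y → 0 < g y)
    (hgmono : MonotoneOn g (Set.Ioi 0))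
    (hgint : ∫⁻ y in Set.Ioc (0:ℝ) b, (ENNReal.ofReal (g y))⁻¹ < ⊤)
    (hdrift : ∀ x : M.X, M.gen f x ≤ -g (f x)) :
    ∀ x : M.X, ∫⁻ ω, M.zeta ω ∂ M.μ x < ⊤ := by
  classical
  obtain ⟨x₀⟩ : Nonempty M.X := inferInstance
  have hfb : ∀ y, f y ≤ b := by
    intro y; rw [hb]; exact le_ciSup hbdd y
  have hbpos : 0 < b := lt_of_lt_of_le (hfpos x₀) (hfb x₀)
  set Ge : ℝ → ℝ≥0∞ := fun u => ∫⁻ y in Set.Ioc (0:ℝ) u, (ENNReal.ofReal (g y))⁻¹ with hGedef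
  have hGemono : ∀ u v : ℝ, u ≤ v → Ge u ≤ Ge v := fun u v huv =>
    lintegral_mono_set (Set.Ioc_subset_Ioc_right huv)
  have hGeb : Ge b < ⊤ := hgint
  have hGefin : ∀ u, u ≤ b → Ge u ≠ ⊤ := fun u hu => ((hGemono u b hu).trans_lt hGeb).ne
  set G : ℝ → ℝ := fun u => (Ge u).toReal with hGdef
  have hGnn : ∀ u, 0 ≤ G u := fun u => ENNReal.toReal_nonneg
  have hGb : ∀ u, u ≤ b → G u ≤ G b := fun u hub =>
    ENNReal.toReal_mono hGeb.ne (hGemono u b hub)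
  -- splitting of the integral
  have hsplit : ∀ u v : ℝ, 0 < u → u ≤ v →
      Ge v = Ge u + ∫⁻ y in Set.Ioc u v, (ENNReal.ofReal (g y))⁻¹ := by
    intro u v hu huv
    have h := lintegral_union (μ := (volume : Measure ℝ))
      (f := fun y => (ENNReal.ofReal (g y))⁻¹) (A := Set.Ioc 0 u) (B := Set.Ioc u v)
      measurableSet_Ioc (Set.Ioc_disjoint_Ioc_of_le le_rfl)
    rw [Set.Ioc_union_Ioc_eq_Ioc hu.le huv] at h
    exact h
  have hupper : ∀ u v : ℝ, 0 < u →
      (∫⁻ y in Set.Ioc u v, (ENNReal.ofReal (g y))⁻¹) ≤ ENNReal.ofReal ((g u)⁻¹ * (v - u)) := by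
    intro u v hu
    have hgu : 0 < g u := hgpos u hu
    calc (∫⁻ y in Set.Ioc u v, (ENNReal.ofReal (g y))⁻¹)
        ≤ ∫⁻ _ in Set.Ioc u v, (ENNReal.ofReal (g u))⁻¹ := by
          refine lintegral_mono_ae ((ae_restrict_iff' measurableSet_Ioc).mpr
            (Filter.Eventually.of_forall fun y hy => ?_))
          exact ENNReal.inv_le_inv' (ENNReal.ofReal_le_ofReal
            (hgmono (Set.mem_Ioi.mpr hu) (Set.mem_Ioi.mpr (hu.trans hy.1)) hy.1.le))
      _ = (ENNReal.ofReal (g u))⁻¹ * volume (Set.Ioc u v) := setLIntegral_const _ _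
      _ = ENNReal.ofReal ((g u)⁻¹ * (v - u)) := by
          rw [Real.volume_Ioc, ← ENNReal.ofReal_inv_of_pos hgu,
            ← ENNReal.ofReal_mul (inv_nonneg.mpr hgu.le)]
  have hlower : ∀ u v : ℝ, 0 < v → v ≤ u →
      ENNReal.ofReal ((g u)⁻¹ * (u - v)) ≤ ∫⁻ y in Set.Ioc v u, (ENNReal.ofReal (g y))⁻¹ := by
    intro u v hv hvu
    have hgu : 0 < g u := hgpos u (hv.trans_le hvu)
    calc ENNReal.ofReal ((g u)⁻¹ * (u - v))
        = (ENNReal.ofReal (g u))⁻¹ * volume (Set.Ioc v u) := by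
          rw [Real.volume_Ioc, ← ENNReal.ofReal_inv_of_pos hgu,
            ← ENNReal.ofReal_mul (inv_nonneg.mpr hgu.le)]
      _ = ∫⁻ _ in Set.Ioc v u, (ENNReal.ofReal (g u))⁻¹ := (setLIntegral_const _ _).symm
      _ ≤ ∫⁻ y in Set.Ioc v u, (ENNReal.ofReal (g y))⁻¹ := by
          refine lintegral_mono_ae ((ae_restrict_iff' measurableSet_Ioc).mpr
            (Filter.Eventually.of_forall fun y hy => ?_))
          exact ENNReal.inv_le_inv' (ENNReal.ofReal_le_ofReal
            (hgmono (Set.mem_Ioi.mpr (hv.trans hy.1)) (Set.mem_Ioi.mpr (hv.trans_le hvu)) hy.2))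
  -- concavity-type inequality
  have hconc : ∀ u v : ℝ, 0 < u → u ≤ b → 0 < v → v ≤ b →
      G v ≤ G u + (g u)⁻¹ * (v - u) := by
    intro u v hu hub hv hvb
    have hgu : 0 < g u := hgpos u hu
    rcases le_total u v with huv | hvu
    · have h1 := hsplit u v hu huv
      have hincfin : (∫⁻ y in Set.Ioc u v, (ENNReal.ofReal (g y))⁻¹) ≠ ⊤ :=
        ((hupper u v hu).trans_lt ENNReal.ofReal_lt_top).ne
      have h2 : G v = G u + (∫⁻ y in Set.Ioc u v, (ENNReal.ofReal (g y))⁻¹).toReal := by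
        simp only [hGdef]
        rw [h1, ENNReal.toReal_add (hGefin u hub) hincfin]
      have h3 : (∫⁻ y in Set.Ioc u v, (ENNReal.ofReal (g y))⁻¹).toReal ≤ (g u)⁻¹ * (v - u) := by
        have h4 := ENNReal.toReal_mono ENNReal.ofReal_ne_top (hupper u v hu)
        rwa [ENNReal.toReal_ofReal
          (mul_nonneg (inv_nonneg.mpr hgu.le) (sub_nonneg.mpr huv))] at h4
      linarith
    · have h1 := hsplit v u hv hvu
      have hincfin : (∫⁻ y in Set.Ioc v u, (ENNReal.ofReal (g y))⁻¹) ≠ ⊤ := by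
        refine ne_top_of_le_ne_top (hGefin u hub) ?_
        rw [h1]
        exact le_add_self
      have h2 : G u = G v + (∫⁻ y in Set.Ioc v u, (ENNReal.ofReal (g y))⁻¹).toReal := by
        simp only [hGdef]
        rw [h1, ENNReal.toReal_add (hGefin v hvb) hincfin]
      have h3 : (g u)⁻¹ * (u - v) ≤ (∫⁻ y in Set.Ioc v u, (ENNReal.ofReal (g y))⁻¹).toReal := by
        have h4 := ENNReal.toReal_mono hincfin (hlower u v hv hvu)
        rwa [ENNReal.toReal_ofReal
          (mul_nonneg (inv_nonneg.mpr hgu.le) (sub_nonneg.mpr hvu))] at h4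
      nlinarith [hgu, sub_nonneg.mpr hvu]
  -- summabilities
  have hsumP : ∀ z, Summable (M.P z) := fun z => (M.P_hasSum z).summable
  have hPone : ∀ z, ∑' y, M.P z y = 1 := fun z => (M.P_hasSum z).tsum_eq
  have hPf : ∀ z, Summable (fun y => M.P z y * f y) := by
    intro z
    refine ((hf.2 z).div_const (M.γ z)).congr fun y => ?_
    by_cases hy : y = z <;> simp [CTMC.P, hy] <;> ring
  have hPG : ∀ z, Summable (fun y => M.P z y * G (f y)) := by
    intro z
    refine Summable.of_nonneg_of_le (fun y => mul_nonneg (M.P_nonneg z y) (hGnn _))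
      (fun y => mul_le_mul_of_nonneg_left (hGb (f y) (hfb y)) (M.P_nonneg z y)) ?_
    exact (hsumP z).mul_right (G b)
  -- drift inequality, real form
  have hT : ∀ z, ∑' y, M.P z y * f y ≤ f z - g (f z) / M.γ z := by
    intro z
    have hγ := M.γ_pos z
    have h1 : ∑' y, M.P z y * f y
        = (∑' y, if y = z then 0 else M.Γ z y * f y) / M.γ z := by
      rw [← tsum_div_const]
      refine tsum_congr fun y => ?_
      by_cases hy : y = z <;> simp [CTMC.P, hy] <;> ring
    have h2 := hdrift z
    simp only [CTMC.gen] at h2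
    rw [h1, div_le_iff₀ hγ, sub_mul, div_mul_cancel₀ _ hγ.ne']
    have h3 : M.γ z * f z = f z * M.γ z := mul_comm _ _
    linarith
  have hmain : ∀ z, (M.γ z)⁻¹ + ∑' y, M.P z y * G (f y) ≤ G (f z) := by
    intro z
    have hγ := M.γ_pos z
    have hgz : 0 < g (f z) := hgpos _ (hfpos z)
    have hstep : ∀ y, M.P z y * G (f y)
        ≤ M.P z y * G (f z) + (M.P z y * f y) * (g (f z))⁻¹
          - M.P z y * (f z * (g (f z))⁻¹) := by
      intro y
      have h1 := hconc (f z) (f y) (hfpos z) (hfb z) (hfpos y) (hfb y)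
      have h2 := mul_le_mul_of_nonneg_left h1 (M.P_nonneg z y)
      calc M.P z y * G (f y) ≤ M.P z y * (G (f z) + (g (f z))⁻¹ * (f y - f z)) := h2
        _ = M.P z y * G (f z) + (M.P z y * f y) * (g (f z))⁻¹
            - M.P z y * (f z * (g (f z))⁻¹) := by ring
    have hsum2 : Summable (fun y => M.P z y * G (f z) + (M.P z y * f y) * (g (f z))⁻¹
        - M.P z y * (f z * (g (f z))⁻¹)) := by
      exact (((hsumP z).mul_right _).add ((hPf z).mul_right _)).sub ((hsumP z).mul_right _)
    have h3 : ∑' y, M.P z y * G (f y)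
        ≤ ∑' y, (M.P z y * G (f z) + (M.P z y * f y) * (g (f z))⁻¹
          - M.P z y * (f z * (g (f z))⁻¹)) := Summable.tsum_le_tsum hstep (hPG z) hsum2
    have h4 : (∑' y, (M.P z y * G (f z) + (M.P z y * f y) * (g (f z))⁻¹
          - M.P z y * (f z * (g (f z))⁻¹)))
        = G (f z) + (∑' y, M.P z y * f y) * (g (f z))⁻¹ - f z * (g (f z))⁻¹ := by
      rw [Summable.tsum_sub (((hsumP z).mul_right _).add ((hPf z).mul_right _)) ((hsumP z).mul_right _),
        Summable.tsum_add ((hsumP z).mul_right _) ((hPf z).mul_right _),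
        tsum_mul_right, tsum_mul_right, tsum_mul_right, hPone z]
      ring
    rw [h4] at h3
    have h5 : (∑' y, M.P z y * f y) * (g (f z))⁻¹
        ≤ (f z - g (f z) / M.γ z) * (g (f z))⁻¹ :=
      mul_le_mul_of_nonneg_right (hT z) (inv_nonneg.mpr hgz.le)
    have h6 : (f z - g (f z) / M.γ z) * (g (f z))⁻¹
        = f z * (g (f z))⁻¹ - (M.γ z)⁻¹ := by
      have h7 : g (f z) / M.γ z * (g (f z))⁻¹ = (M.γ z)⁻¹ := by
        rw [div_mul_eq_mul_div, mul_inv_cancel₀ hgz.ne', one_div]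
      rw [sub_mul, h7]
    linarith
  -- drift inequality, ENNReal form
  have hGF : ∀ z, M.rr z + ∑' y, M.Pe z y * Ge (f y) ≤ Ge (f z) := by
    intro z
    have h1 : ∀ y, M.Pe z y * Ge (f y) = ENNReal.ofReal (M.P z y * G (f y)) := by
      intro y
      rw [ENNReal.ofReal_mul (M.P_nonneg z y)]
      congr 1
      simp only [hGdef]
      rw [ENNReal.ofReal_toReal (hGefin _ (hfb y))]
    have h2 : (∑' y, M.Pe z y * Ge (f y)) = ENNReal.ofReal (∑' y, M.P z y * G (f y)) := by
      rw [tsum_congr h1, ← ENNReal.ofReal_tsum_of_nonneg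
        (fun y => mul_nonneg (M.P_nonneg z y) (hGnn _)) (hPG z)]
    rw [h2]
    have h3 : M.rr z = ENNReal.ofReal (M.γ z)⁻¹ := rfl
    rw [h3, ← ENNReal.ofReal_add (inv_nonneg.mpr (M.γ_pos z).le)
      (tsum_nonneg fun y => mul_nonneg (M.P_nonneg z y) (hGnn _))]
    calc ENNReal.ofReal ((M.γ z)⁻¹ + ∑' y, M.P z y * G (f y))
        ≤ ENNReal.ofReal (G (f z)) := ENNReal.ofReal_le_ofReal (hmain z)
      _ ≤ Ge (f z) := by
          simp only [hGdef]
          exact ENNReal.ofReal_toReal_le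
  -- assembling
  intro x
  have hEz : ∫⁻ ω, M.zeta ω ∂ M.μ x = ∑' n, ∫⁻ ω, ENNReal.ofReal (M.hold n ω) ∂ M.μ x := by
    have hmeasJ : ∀ n, Measurable fun ω => ENNReal.ofReal (M.J n ω) := fun n =>
      (Finset.measurable_sum _ fun k _ => M.hold_meas k).ennreal_ofReal
    have hmono : Monotone fun n => fun ω => ENNReal.ofReal (M.J n ω) := by
      intro m n hmn
      intro ω
      refine ENNReal.ofReal_le_ofReal ?_
      exact Finset.sum_le_sum_of_subset_of_nonneg (Finset.range_subset_range.mpr hmn)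
        (fun i _ _ => (M.hold_pos i ω).le)
    calc ∫⁻ ω, M.zeta ω ∂ M.μ x
        = ⨆ n, ∫⁻ ω, ENNReal.ofReal (M.J n ω) ∂ M.μ x := by
          simp only [CTMC.zeta]
          exact lintegral_iSup hmeasJ hmono
      _ = ⨆ n, ∑ k ∈ Finset.range n, ∫⁻ ω, ENNReal.ofReal (M.hold k ω) ∂ M.μ x := by
          refine iSup_congr fun n => ?_
          rw [← lintegral_finset_sum _ (fun k _ => (M.hold_meas k).ennreal_ofReal)]
          refine lintegral_congr fun ω => ?_
          simp only [CTMC.J]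
          exact ENNReal.ofReal_sum_of_nonneg (fun i _ => (M.hold_pos i ω).le)
      _ = ∑' n, ∫⁻ ω, ENNReal.ofReal (M.hold n ω) ∂ M.μ x := ENNReal.tsum_eq_iSup_nat.symm
  have hterm : ∀ n, ∫⁻ ω, ENNReal.ofReal (M.hold n ω) ∂ M.μ x = M.S n x := by
    intro n
    rw [M.E_hold x n]
    exact M.tsum_paths n x
  rw [hEz, tsum_congr hterm]
  have hle : (∑' n, M.S n x) ≤ Ge (f x) := by
    rw [ENNReal.tsum_eq_iSup_nat]
    exact iSup_le fun n => M.partial_bound (fun z => Ge (f z)) hGF n x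
  exact lt_of_le_of_lt (hle.trans (hGemono (f x) b (hfb x))) hgint
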